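/- Let A be a nonnegative tensor of order m and dimension n, and let y be an eigenvector of A corresponding to an eigenvalue λ with |λ| = ρ(A), where A is weakly irreducible. Then the entrywise absolute value |y| is an eigenvector of A corresponding to ρ(A), and it equals the unique positive eigenvector (Perron vector) of A up to a positive scalar. -/

import Mathlib

open scoped BigOperators

namespace PaperTensor

/-- A tensor of order `m` and dimension `|ι|`: entry `A i f` is `a_{i, f 0, …, f (m-2)}`. -/
abbrev Tensor (ι : Type) (m : ℕ) : Type := ι → (Fin (m - 1) → ι) → ℂ

variable {ι : Type} [Fintype ι] {m : ℕ}

/-- `(A x^{m-1})_i = ∑ a_{i i₂ … i_m} x_{i₂} ⋯ x_{i_m}`. -/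
noncomputable def tApp (A : Tensor ι m) (x : ι → ℂ) (i : ι) : ℂ :=
  ∑ f : Fin (m - 1) → ι, A i f * ∏ j, x (f j)

/-- `x ≠ 0` and `A x^{m-1} = l x^{[m-1]}`. -/
def IsEigPair (A : Tensor ι m) (l : ℂ) (x : ι → ℂ) : Prop :=
  x ≠ 0 ∧ ∀ i, tApp A x i = l * x i ^ (m - 1)

def Eigenvalues (A : Tensor ι m) : Set ℂ := {l | ∃ x, IsEigPair A l x}

/-- The spectral radius: the largest modulus of an eigenvalue. -/
noncomputable def specRad (A : Tensor ι m) : ℝ := sSup ((fun z : ℂ => ‖z‖) '' Eigenvalues A)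

/-- All entries are nonnegative reals. -/
def Nonneg (A : Tensor ι m) : Prop := ∀ i f, ∃ r : ℝ, 0 ≤ r ∧ A i f = (r : ℂ)

/-- Arc `(i,j)` of the directed graph `G(A)`. -/
def Arc (A : Tensor ι m) (i j : ι) : Prop := ∃ f, A i f ≠ 0 ∧ ∃ k, f k = j

/-- `G(A)` is strongly connected. -/
def WeaklyIrreducible (A : Tensor ι m) : Prop :=
  ∀ i j : ι, Relation.ReflTransGen (Arc A) i j

/-- The projective eigenvariety `PV_l(A) ⊆ ℙ^{n-1}`. -/
def PV (A : Tensor ι m) (l : ℂ) : Set (Projectivization ℂ (ι → ℂ)) :=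
  {p | ∃ (v : ι → ℂ) (hv : v ≠ 0), Projectivization.mk ℂ v hv = p ∧
        ∀ i, tApp A v i = l * v i ^ (m - 1)}

/-- `(D^{-(m-1)} A D)_{i₁…i_m} = d_{i₁}^{-(m-1)} a_{i₁…i_m} d_{i₂} ⋯ d_{i_m}`. -/
noncomputable def diagConj (d : ι → ℂ) (A : Tensor ι m) : Tensor ι m :=
  fun i f => (d i)⁻¹ ^ (m - 1) * A i f * ∏ j, d (f j)

/-- Combinatorial symmetry: the support is invariant under permutations of indices. -/
def CombSymm (A : Tensor ι m) : Prop :=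
  ∀ i f i' f', (i ::ₘ Multiset.map f Finset.univ.val) = (i' ::ₘ Multiset.map f' Finset.univ.val) →
    (A i f ≠ 0 ↔ A i' f' ≠ 0)

/-- Irreducibility of a tensor. -/
def Irred (A : Tensor ι m) : Prop :=
  ¬ ∃ S : Set ι, S.Nonempty ∧ S ≠ Set.univ ∧
      ∀ i ∈ S, ∀ f : Fin (m - 1) → ι, (∀ j, f j ∉ S) → A i f = 0

/-- Solid arc: `(i,j)` arising from a nonzero entry `a_{ij…j}`. -/
def SolidArc (A : Tensor ι m) (i j : ι) : Prop := A i (fun _ => j) ≠ 0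

/-- Spectral `ℓ`-symmetry: `Spec(A) = e^{2πi/ℓ} Spec(A)`. -/
def SpectralSymm (A : Tensor ι m) (ℓ : ℕ) : Prop :=
  Eigenvalues A = (fun z => Complex.exp ((2 * Real.pi / ℓ : ℝ) * Complex.I) * z) '' Eigenvalues A

/-- The set `𝔇^{(j)}(A)` (for the given `ℓ`), as diagonal matrices recorded by their diagonals. -/
def Dgj {n m : ℕ} [NeZero n] (A : Tensor (Fin n) m) (ℓ j : ℕ) : Set (Fin n → ℂ) :=
  {d | (∀ i, d i ≠ 0) ∧ d 0 = 1 ∧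
    ∀ i f, A i f = Complex.exp (-(2 * Real.pi * j / ℓ : ℝ) * Complex.I) * diagConj d A i f}

/-- The group `𝔇(A) = ⋃_{j=0}^{ℓ-1} 𝔇^{(j)}(A)`. -/
def DgAll {n m : ℕ} [NeZero n] (A : Tensor (Fin n) m) (ℓ : ℕ) : Set (Fin n → ℂ) :=
  {d | ∃ j < ℓ, d ∈ Dgj A ℓ j}

/-- `𝔇^{(0)}(A)`. -/
def Dg0 {n m : ℕ} [NeZero n] (A : Tensor (Fin n) m) : Set (Fin n → ℂ) :=
  {d | (∀ i, d i ≠ 0) ∧ d 0 = 1 ∧ ∀ i f, A i f = diagConj d A i f}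

/-- Restriction (principal subtensor) of `A` to a set `S` of indices. -/
def restrict (A : Tensor ι m) (S : Set ι) : Tensor S m :=
  fun i f => A i.1 (fun j => (f j).1)

set_option linter.unusedSectionVars false
set_option maxHeartbeats 1000000

section Aux
open Finset Relation Filter Topology
variable {ι : Type} [Fintype ι] [DecidableEq ι] [Nonempty ι] {M : ℕ}

noncomputable def rApp (a : ι → (Fin M → ι) → ℝ) (x : ι → ℝ) (i : ι) : ℝ :=
  ∑ f : Fin M → ι, a i f * ∏ j, x (f j)

lemma rApp_nonneg {a : ι → (Fin M → ι) → ℝ} (ha : ∀ i f, 0 ≤ a i f)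
    {x : ι → ℝ} (hx : ∀ i, 0 ≤ x i) (i : ι) : 0 ≤ rApp a x i :=
  Finset.sum_nonneg fun f _ => mul_nonneg (ha i f) (Finset.prod_nonneg fun j _ => hx (f j))

lemma rApp_mono {a : ι → (Fin M → ι) → ℝ} (ha : ∀ i f, 0 ≤ a i f)
    {x y : ι → ℝ} (hx : ∀ i, 0 ≤ x i) (hxy : ∀ i, x i ≤ y i) (i : ι) :
    rApp a x i ≤ rApp a y i := by
  refine Finset.sum_le_sum fun f _ => mul_le_mul_of_nonneg_left ?_ (ha i f)
  exact Finset.prod_le_prod (fun j _ => hx (f j)) (fun j _ => hxy (f j))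

lemma rApp_smul (a : ι → (Fin M → ι) → ℝ) (c : ℝ) (x : ι → ℝ) (i : ι) :
    rApp a (fun j => c * x j) i = c ^ M * rApp a x i := by
  unfold rApp
  rw [Finset.mul_sum]
  refine Finset.sum_congr rfl fun f _ => ?_
  rw [Finset.prod_mul_distrib, Finset.prod_const, Finset.card_univ, Fintype.card_fin]
  ring

lemma rApp_continuous (a : ι → (Fin M → ι) → ℝ) (i : ι) :
    Continuous fun x : ι → ℝ => rApp a x i := by
  refine continuous_finset_sum _ fun f _ => Continuous.mul continuous_const ?_
  exact continuous_finset_prod _ fun j _ => continuous_apply (f j)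

lemma rApp_single_le {a : ι → (Fin M → ι) → ℝ} (ha : ∀ i f, 0 ≤ a i f)
    {x : ι → ℝ} (hx : ∀ i, 0 ≤ x i) (i : ι) (f : Fin M → ι) :
    a i f * ∏ j, x (f j) ≤ rApp a x i :=
  Finset.single_le_sum
    (fun g _ => mul_nonneg (ha i g) (Finset.prod_nonneg fun j _ => hx (g j)))
    (Finset.mem_univ f)

/-- Upper estimate: `rApp a x i ≤ (∑_f a i f) * b ^ M` when `0 ≤ x ≤ b`. -/
lemma rApp_le_rowsum {a : ι → (Fin M → ι) → ℝ} (ha : ∀ i f, 0 ≤ a i f)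
    {x : ι → ℝ} (hx : ∀ i, 0 ≤ x i) {b : ℝ} (hb : ∀ i, x i ≤ b) (i : ι) :
    rApp a x i ≤ (∑ f : Fin M → ι, a i f) * b ^ M := by
  rw [Finset.sum_mul]
  refine Finset.sum_le_sum fun f _ => mul_le_mul_of_nonneg_left ?_ (ha i f)
  calc ∏ j, x (f j) ≤ ∏ _j : Fin M, b :=
        Finset.prod_le_prod (fun j _ => hx (f j)) (fun j _ => hb (f j))
    _ = b ^ M := by rw [Finset.prod_const, Finset.card_univ, Fintype.card_fin]

/-- Perron-Frobenius existence for strictly positive tensors. -/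
theorem posEig (hM : 1 ≤ M) (a : ι → (Fin M → ι) → ℝ) (ha : ∀ i f, 0 < a i f) :
    ∃ (lam : ℝ) (z : ι → ℝ), 0 < lam ∧ (∀ i, 0 < z i) ∧ z ∈ stdSimplex ℝ ι ∧
      ∀ i, rApp a z i = lam * z i ^ M := by
  classical
  have ha' : ∀ i f, 0 ≤ a i f := fun i f => (ha i f).le
  have hMne : M ≠ 0 := by omega
  set T : Set ℝ := {t | ∃ x : ι → ℝ, x ∈ stdSimplex ℝ ι ∧ ∀ i, t * x i ^ M ≤ rApp a x i}
    with hTdef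
  have hcard : (0:ℝ) < (Fintype.card ι : ℝ) := by
    exact_mod_cast Fintype.card_pos
  -- uniform vector
  set u : ι → ℝ := fun _ => (Fintype.card ι : ℝ)⁻¹ with hu_def
  have hu : u ∈ stdSimplex ℝ ι := by
    constructor
    · intro i; positivity
    · simp only [hu_def, Finset.sum_const, Finset.card_univ, nsmul_eq_mul]
      rw [mul_inv_cancel₀ (ne_of_gt hcard)]
  have hupos : ∀ i, 0 < u i := fun i => by positivity
  have hrAppu : ∀ i, 0 < rApp a u i := by
    intro i
    refine Finset.sum_pos (fun f _ => mul_pos (ha i f) (Finset.prod_pos fun j _ => hupos (f j)))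
      Finset.univ_nonempty
  -- a positive element of T
  obtain ⟨i₁, -, hmin⟩ := Finset.exists_min_image Finset.univ (fun i => rApp a u i)
    Finset.univ_nonempty
  set t₀ : ℝ := rApp a u i₁ * (Fintype.card ι : ℝ) ^ M with ht₀def
  have ht₀pos : 0 < t₀ := mul_pos (hrAppu i₁) (by positivity)
  have ht₀T : t₀ ∈ T := by
    refine ⟨u, hu, fun i => ?_⟩
    have : t₀ * u i ^ M = rApp a u i₁ := by
      rw [ht₀def]
      have : u i = (Fintype.card ι : ℝ)⁻¹ := rfl
      rw [this, inv_pow]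
      field_simp
    rw [this]
    exact hmin i (Finset.mem_univ i)
  have hTne : T.Nonempty := ⟨t₀, ht₀T⟩
  -- bounded above
  obtain ⟨iR, -, hiR⟩ := Finset.exists_max_image Finset.univ
    (fun i => ∑ f : Fin M → ι, a i f) Finset.univ_nonempty
  set Λ₀ : ℝ := ∑ f : Fin M → ι, a iR f with hΛ₀def
  have hbdd : BddAbove T := by
    refine ⟨Λ₀, fun t ht => ?_⟩
    obtain ⟨x, hxS, hx⟩ := ht
    obtain ⟨im, -, him⟩ := Finset.exists_max_image Finset.univ x Finset.univ_nonempty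
    have hxim : 0 < x im := by
      rcases lt_or_ge 0 (x im) with h | h
      · exact h
      · exfalso
        have : ∀ i, x i = 0 := fun i => le_antisymm (le_trans (him i (Finset.mem_univ i)) h)
          (hxS.1 i)
        have hsum := hxS.2
        simp only [this] at hsum
        simp at hsum
    have h1 : t * x im ^ M ≤ rApp a x im := hx im
    have h2 : rApp a x im ≤ (∑ f : Fin M → ι, a im f) * x im ^ M :=
      rApp_le_rowsum ha' hxS.1 (fun i => him i (Finset.mem_univ i)) im
    have h3 : (∑ f : Fin M → ι, a im f) ≤ Λ₀ := hiR im (Finset.mem_univ im)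
    have := h1.trans (h2.trans (mul_le_mul_of_nonneg_right h3 (by positivity)))
    exact le_of_mul_le_mul_right this (pow_pos hxim M)
  set lam : ℝ := sSup T with hlamdef
  have hlam0 : 0 < lam := lt_of_lt_of_le ht₀pos (le_csSup hbdd ht₀T)
  -- attainment via nested compacts
  set C : ℕ → Set (ι → ℝ) := fun k =>
    {x | x ∈ stdSimplex ℝ ι ∧ ∀ i, (lam - lam * (1 / (k + 1))) * x i ^ M ≤ rApp a x i}
    with hCdef
  have hCclosed : ∀ k, IsClosed (C k) := by
    intro k
    have : C k = stdSimplex ℝ ι ∩ ⋂ i, {x | (lam - lam * (1 / (k + 1))) * x i ^ M ≤ rApp a x i} := by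
      ext x; simp [hCdef, Set.mem_iInter]
    rw [this]
    refine (isClosed_stdSimplex ℝ ι).inter (isClosed_iInter fun i => ?_)
    exact isClosed_le (Continuous.mul continuous_const ((continuous_apply i).pow M))
      (rApp_continuous a i)
  have hCsub : ∀ k, C (k + 1) ⊆ C k := by
    intro k x hx
    refine ⟨hx.1, fun i => ?_⟩
    refine le_trans (mul_le_mul_of_nonneg_right ?_ (pow_nonneg (hx.1.1 i) M)) (hx.2 i)
    have h1 : lam * (1 / ((k:ℝ) + 1 + 1)) ≤ lam * (1 / ((k:ℝ) + 1)) := by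
      refine mul_le_mul_of_nonneg_left ?_ hlam0.le
      rw [div_le_div_iff₀ (by positivity) (by positivity)]
      linarith
    push_cast
    push_cast at h1
    linarith
  have hCne : ∀ k, (C k).Nonempty := by
    intro k
    have hlt : lam - lam * (1 / (k + 1)) < lam := by
      have : 0 < lam * (1 / ((k:ℝ) + 1)) := by positivity
      linarith
    obtain ⟨t', ht'T, ht'⟩ := exists_lt_of_lt_csSup hTne hlt
    obtain ⟨x, hxS, hx⟩ := ht'T
    refine ⟨x, hxS, fun i => ?_⟩
    refine le_trans (mul_le_mul_of_nonneg_right ht'.le (pow_nonneg (hxS.1 i) M)) (hx i)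
  obtain ⟨z, hz⟩ := IsCompact.nonempty_iInter_of_sequence_nonempty_isCompact_isClosed C
    hCsub hCne
    (IsCompact.of_isClosed_subset (isCompact_stdSimplex ℝ ι) (hCclosed 0) fun x hx => hx.1)
    hCclosed
  have hzC : ∀ k, z ∈ C k := by
    intro k
    exact Set.mem_iInter.mp hz k
  have hzS : z ∈ stdSimplex ℝ ι := (hzC 0).1
  have hz0 : ∀ i, 0 ≤ z i := hzS.1
  -- limit inequality
  have hsub_lam : ∀ i, lam * z i ^ M ≤ rApp a z i := by
    intro i
    have htend : Tendsto (fun k : ℕ => (lam - lam * (1 / (k + 1))) * z i ^ M) atTop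
        (𝓝 (lam * z i ^ M)) := by
      have h1 : Tendsto (fun k : ℕ => lam - lam * (1 / (k + 1))) atTop (𝓝 lam) := by
        have h2 := tendsto_one_div_add_atTop_nhds_zero_nat.const_mul lam
        have h3 := tendsto_const_nhds (x := lam) (f := atTop (α := ℕ)) |>.sub h2
        simpa using h3
      simpa using h1.mul_const (z i ^ M)
    exact le_of_tendsto htend (Filter.Eventually.of_forall fun k => (hzC k).2 i)
  -- positivity of rApp a z
  obtain ⟨s₀, hs₀⟩ : ∃ s₀, z s₀ ≠ 0 := by
    by_contra h
    push_neg at h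
    have := hzS.2
    simp only [h] at this
    simp at this
  have hzs₀ : 0 < z s₀ := lt_of_le_of_ne (hz0 s₀) (Ne.symm hs₀)
  have hrApp_pos : ∀ i, 0 < rApp a z i := by
    intro i
    have h1 : 0 < a i (fun _ => s₀) * ∏ _j : Fin M, z s₀ := by
      refine mul_pos (ha _ _) (Finset.prod_pos fun j _ => hzs₀)
    calc (0:ℝ) < a i (fun _ => s₀) * ∏ j : Fin M, z ((fun _ => s₀) j) := h1
      _ ≤ rApp a z i := rApp_single_le ha' hz0 i _
  -- equality
  have heq : ∀ i, rApp a z i = lam * z i ^ M := by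
    by_contra hcon
    push_neg at hcon
    obtain ⟨i₂, hi₂⟩ := hcon
    have hslack : lam * z i₂ ^ M < rApp a z i₂ := lt_of_le_of_ne (hsub_lam i₂) (Ne.symm hi₂)
    set s : ℝ := rApp a z i₂ - lam * z i₂ ^ M with hsdef
    have hspos : 0 < s := by simp [hsdef]; linarith
    -- choose ε
    have hcont : Tendsto (fun e : ℝ => lam * ((z i₂ + e) ^ M - z i₂ ^ M)) (𝓝 0) (𝓝 0) := by
      have : Continuous fun e : ℝ => lam * ((z i₂ + e) ^ M - z i₂ ^ M) := by continuity
      have h0 := this.tendsto 0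
      simpa using h0
    have hev : ∀ᶠ e in 𝓝[>] (0:ℝ), lam * ((z i₂ + e) ^ M - z i₂ ^ M) < s :=
      (hcont.eventually_lt_const hspos).filter_mono nhdsWithin_le_nhds
    obtain ⟨ε, hεs, hεpos⟩ := (hev.and (eventually_mem_nhdsWithin)).exists
    rw [Set.mem_Ioi] at hεpos
    set d : ℝ := (z i₂ + ε) ^ M - z i₂ ^ M with hddef
    have hdpos : 0 < d := by
      have h := pow_lt_pow_left₀ (lt_add_of_pos_right (z i₂) hεpos) (hz0 i₂) hMne
      simp only [hddef]
      linarith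
    obtain ⟨ia, -, hia⟩ := Finset.exists_min_image Finset.univ (fun i => a i (fun _ => i₂))
      Finset.univ_nonempty
    set am : ℝ := a ia (fun _ => i₂) with hamdef
    have hampos : 0 < am := ha _ _
    set x' : ι → ℝ := Function.update z i₂ (z i₂ + ε) with hx'def
    have hx'ge : ∀ i, z i ≤ x' i := by
      intro i
      rcases eq_or_ne i i₂ with rfl | h
      · simp [hx'def]; linarith
      · simp [hx'def, Function.update_of_ne h]
    have hx'0 : ∀ i, 0 ≤ x' i := fun i => (hz0 i).trans (hx'ge i)
    have hx'i₂ : x' i₂ = z i₂ + ε := by simp [hx'def]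
    have hgrow : ∀ j, rApp a z j + am * d ≤ rApp a x' j := by
      intro j
      set c1 : Fin M → ι := fun _ => i₂ with hc1
      have hz_split : rApp a z j = a j c1 * ∏ jj, z (c1 jj) +
          ∑ f ∈ Finset.univ.erase c1, a j f * ∏ jj, z (f jj) :=
        (Finset.add_sum_erase _ _ (Finset.mem_univ c1)).symm
      have hx_split : rApp a x' j = a j c1 * ∏ jj, x' (c1 jj) +
          ∑ f ∈ Finset.univ.erase c1, a j f * ∏ jj, x' (f jj) :=
        (Finset.add_sum_erase _ _ (Finset.mem_univ c1)).symm
      have hprodz : ∏ jj, z (c1 jj) = z i₂ ^ M := by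
        simp [hc1, Finset.prod_const, Finset.card_univ]
      have hprodx : ∏ jj, x' (c1 jj) = (z i₂ + ε) ^ M := by
        simp [hc1, hx'i₂, Finset.prod_const, Finset.card_univ]
      have herased : ∑ f ∈ Finset.univ.erase c1, a j f * ∏ jj, z (f jj)
          ≤ ∑ f ∈ Finset.univ.erase c1, a j f * ∏ jj, x' (f jj) := by
        refine Finset.sum_le_sum fun f _ => mul_le_mul_of_nonneg_left ?_ (ha' j f)
        exact Finset.prod_le_prod (fun jj _ => hz0 (f jj)) (fun jj _ => hx'ge (f jj))
      have hterm : a j c1 * z i₂ ^ M + am * d ≤ a j c1 * (z i₂ + ε) ^ M := by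
        have h1 : am * d ≤ a j c1 * d :=
          mul_le_mul_of_nonneg_right (hia j (Finset.mem_univ j)) hdpos.le
        have h2 : a j c1 * (z i₂ + ε) ^ M = a j c1 * z i₂ ^ M + a j c1 * d := by
          rw [hddef]; ring
        linarith
      rw [hz_split, hx_split, hprodz, hprodx]
      linarith
    set e0 : ℝ := am * d with he0
    have he0pos : 0 < e0 := mul_pos hampos hdpos
    have hall : ∀ j, lam * x' j ^ M + e0 ≤ rApp a x' j := by
      intro j
      rcases eq_or_ne j i₂ with rfl | hne
      · have h1 : rApp a z j = lam * z j ^ M + s := by rw [hsdef]; ring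
        have h2 : lam * x' j ^ M = lam * z j ^ M + lam * d := by
          rw [hx'i₂, hddef]; ring
        have h3 := hgrow j
        rw [h1] at h3
        rw [h2]
        linarith [hεs]
      · have h2 : x' j = z j := by simp [hx'def, Function.update_of_ne hne]
        have h3 := hgrow j
        rw [h2]
        linarith [hsub_lam j]
    set σ : ℝ := ∑ i, x' i with hσ
    have hσeq : σ = 1 + ε := by
      rw [hσ, hx'def, Finset.sum_update_of_mem (Finset.mem_univ i₂)]
      have hz1 := hzS.2
      rw [← Finset.add_sum_erase _ z (Finset.mem_univ i₂)] at hz1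
      rw [Finset.sdiff_singleton_eq_erase]
      linarith
    have hσpos : 0 < σ := by rw [hσeq]; linarith
    have hx'le : ∀ i, x' i ≤ σ := fun i =>
      Finset.single_le_sum (fun i _ => hx'0 i) (Finset.mem_univ i)
    set η : ℝ := e0 / σ ^ M with hηdef
    have hηpos : 0 < η := div_pos he0pos (pow_pos hσpos M)
    have hmem : lam + η ∈ T := by
      refine ⟨fun j => σ⁻¹ * x' j, ⟨fun j => mul_nonneg (inv_nonneg.mpr hσpos.le) (hx'0 j), ?_⟩, fun i => ?_⟩
      · rw [← Finset.mul_sum, ← hσ, inv_mul_cancel₀ hσpos.ne']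
      · have key : (lam + η) * x' i ^ M ≤ rApp a x' i := by
          have h1 : x' i ^ M ≤ σ ^ M := pow_le_pow_left₀ (hx'0 i) (hx'le i) M
          have h2 : η * x' i ^ M ≤ η * σ ^ M := mul_le_mul_of_nonneg_left h1 hηpos.le
          have h3 : η * σ ^ M = e0 := by rw [hηdef]; field_simp
          have h4 := hall i
          have hexp : (lam + η) * x' i ^ M = lam * x' i ^ M + η * x' i ^ M := by ring
          linarith
        calc (lam + η) * (σ⁻¹ * x' i) ^ M = σ⁻¹ ^ M * ((lam + η) * x' i ^ M) := by
              rw [mul_pow]; ring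
          _ ≤ σ⁻¹ ^ M * rApp a x' i :=
              mul_le_mul_of_nonneg_left key (pow_nonneg (inv_nonneg.mpr hσpos.le) M)
          _ = rApp a (fun j => σ⁻¹ * x' j) i := (rApp_smul a σ⁻¹ x' i).symm
    have hle := le_csSup hbdd hmem
    rw [← hlamdef] at hle
    linarith
  have hzpos : ∀ i, 0 < z i := by
    intro i
    rcases (hz0 i).lt_or_eq with h | h
    · exact h
    · exfalso
      have h1 := heq i
      rw [← h, zero_pow hMne, mul_zero] at h1
      exact (hrApp_pos i).ne' h1
  exact ⟨lam, z, hlam0, hzpos, hzS, heq⟩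

lemma chain_lemma (hM : 1 ≤ M) {r : ι → ι → Prop} {i j : ι}
    (h : Relation.ReflTransGen r i j) :
    ∃ p q : ℕ, ∀ (w : ι → ℝ) (c μ : ℝ), 0 ≤ c → 0 < μ → (∀ k, 0 ≤ w k) →
      (∀ i' j', r i' j' → c * μ ^ (M - 1) * w j' ≤ w i' ^ M) →
      c ^ q * μ ^ (M ^ p - 1) * w j ≤ w i ^ M ^ p := by
  induction h using Relation.ReflTransGen.head_induction_on with
  | refl =>
    refine ⟨0, 0, fun w c μ hc hμ hw harc => ?_⟩
    simp
  | @head u v hik _ ih =>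
    obtain ⟨p, q, IH⟩ := ih
    refine ⟨p + 1, M ^ p + q, fun w c μ hc hμ hw harc => ?_⟩
    have hX : 1 ≤ M ^ p := Nat.one_le_pow _ _ hM
    have h1 : (c * μ ^ (M - 1) * w v) ^ M ^ p ≤ (w u ^ M) ^ M ^ p :=
      pow_le_pow_left₀ (mul_nonneg (mul_nonneg hc (pow_nonneg hμ.le _)) (hw _)) (harc _ _ hik) _
    have h2 : (w u ^ M) ^ M ^ p = w u ^ M ^ (p + 1) := by
      rw [← pow_mul, pow_succ, mul_comm (M ^ p) M]
    have h3 : (c * μ ^ (M - 1) * w v) ^ M ^ p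
        = c ^ M ^ p * μ ^ ((M - 1) * M ^ p) * w v ^ M ^ p := by
      rw [mul_pow, mul_pow, ← pow_mul]
    have h4 : c ^ M ^ p * μ ^ ((M - 1) * M ^ p) * (c ^ q * μ ^ (M ^ p - 1) * w j)
        ≤ c ^ M ^ p * μ ^ ((M - 1) * M ^ p) * w v ^ M ^ p := by
      refine mul_le_mul_of_nonneg_left (IH w c μ hc hμ hw harc) (mul_nonneg (pow_nonneg hc _) (pow_nonneg hμ.le _))
    have hexp : (M - 1) * M ^ p + (M ^ p - 1) = M ^ (p + 1) - 1 := by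
      have h5 : (M - 1) * M ^ p = M ^ (p + 1) - M ^ p := by
        rw [Nat.sub_mul, one_mul, pow_succ, mul_comm]
      have h6 : M ^ p ≤ M ^ (p + 1) := Nat.pow_le_pow_right (by omega) (by omega)
      omega
    calc c ^ (M ^ p + q) * μ ^ (M ^ (p + 1) - 1) * w j
        = c ^ M ^ p * μ ^ ((M - 1) * M ^ p) * (c ^ q * μ ^ (M ^ p - 1) * w j) := by
          rw [← hexp, pow_add, pow_add]; ring
      _ ≤ c ^ M ^ p * μ ^ ((M - 1) * M ^ p) * w v ^ M ^ p := h4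
      _ = (c * μ ^ (M - 1) * w v) ^ M ^ p := h3.symm
      _ ≤ (w u ^ M) ^ M ^ p := h1
      _ = w u ^ M ^ (p + 1) := h2


/-- Perron–Frobenius existence for weakly irreducible nonnegative tensors. -/
theorem wiEig (hM : 1 ≤ M) (a : ι → (Fin M → ι) → ℝ) (ha : ∀ i f, 0 ≤ a i f)
    (hwi : ∀ i j, Relation.ReflTransGen (fun i j => ∃ f, a i f ≠ 0 ∧ ∃ k, f k = j) i j)
    (hne : ∃ i f, a i f ≠ 0) :
    ∃ (lam : ℝ) (z : ι → ℝ), 0 < lam ∧ (∀ i, 0 < z i) ∧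
      ∀ i, rApp a z i = lam * z i ^ M := by
  classical
  have hMne : M ≠ 0 := by omega
  -- the perturbed tensors
  set B : ℕ → ι → (Fin M → ι) → ℝ := fun k i f => a i f + 1 / (k + 1) with hBdef
  have hBpos : ∀ k i f, 0 < B k i f := fun k i f => by
    have : (0:ℝ) < 1 / ((k:ℝ) + 1) := by positivity
    have := ha i f
    simp only [hBdef]
    linarith
  choose lam z hlam hz hzS heig using fun k => posEig hM (B k) (hBpos k)
  have hz0 : ∀ k i, 0 ≤ z k i := fun k i => (hz k i).le
  -- uniform upper bound on lam k
  obtain ⟨iR, -, hiR⟩ := Finset.exists_max_image Finset.univ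
    (fun i => ∑ f : Fin M → ι, (a i f + 1)) Finset.univ_nonempty
  set Λ : ℝ := ∑ f : Fin M → ι, (a iR f + 1) with hΛdef
  have hΛpos : 0 < Λ := by
    refine Finset.sum_pos (fun f _ => by linarith [ha iR f]) Finset.univ_nonempty
  have hlamΛ : ∀ k, lam k ≤ Λ := by
    intro k
    obtain ⟨im, -, him⟩ := Finset.exists_max_image Finset.univ (z k) Finset.univ_nonempty
    have hB1 : ∀ i f, B k i f ≤ a i f + 1 := by
      intro i f
      have h1 : 1 / ((k:ℝ) + 1) ≤ 1 := by
        rw [div_le_one (by positivity)]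
        linarith [Nat.cast_nonneg (α := ℝ) k]
      simp only [hBdef]
      linarith
    have h2 : rApp (B k) (z k) im ≤ rApp (fun i f => a i f + 1) (z k) im :=
      Finset.sum_le_sum fun f _ => mul_le_mul_of_nonneg_right (hB1 im f)
        (Finset.prod_nonneg fun j _ => hz0 k (f j))
    have h3 : rApp (fun i f => a i f + 1) (z k) im
        ≤ (∑ f : Fin M → ι, (a im f + 1)) * z k im ^ M :=
      rApp_le_rowsum (fun i f => by linarith [ha i f]) (hz0 k)
        (fun i => him i (Finset.mem_univ i)) im
    have h4 : (∑ f : Fin M → ι, (a im f + 1)) ≤ Λ := hiR im (Finset.mem_univ im)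
    have h5 := (heig k im).symm.le.trans (h2.trans (h3.trans
      (mul_le_mul_of_nonneg_right h4 (pow_nonneg (hz0 k im) M))))
    exact le_of_mul_le_mul_right h5 (pow_pos (hz k im) M)
  -- smallest nonzero entry of a
  have hSne : (Finset.univ.filter
      (fun p : ι × (Fin M → ι) => a p.1 p.2 ≠ 0)).Nonempty := by
    obtain ⟨i, f, hif⟩ := hne
    exact ⟨(i, f), by simp [hif]⟩
  obtain ⟨pm, hpmmem, hpm⟩ := Finset.exists_min_image _
    (fun p : ι × (Fin M → ι) => a p.1 p.2) hSne
  set amin : ℝ := a pm.1 pm.2 with hamindef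
  have haminpos : 0 < amin := by
    have := (Finset.mem_filter.mp hpmmem).2
    exact lt_of_le_of_ne (ha _ _) (Ne.symm this)
  set c : ℝ := min 1 (amin / Λ) with hcdef
  have hcpos : 0 < c := lt_min one_pos (div_pos haminpos hΛpos)
  have hc1 : c ≤ 1 := min_le_left _ _
  -- arc inequality for each k
  have harc : ∀ k (μ : ℝ), 0 < μ → (∀ i, μ ≤ z k i) →
      ∀ i j, (∃ f, a i f ≠ 0 ∧ ∃ kk, f kk = j) →
      c * μ ^ (M - 1) * z k j ≤ z k i ^ M := by
    intro k μ hμpos hμle i j ⟨f, hf, kk, hkk⟩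
    have hprod : z k j * μ ^ (M - 1) ≤ ∏ jj, z k (f jj) := by
      rw [← Finset.mul_prod_erase Finset.univ (fun jj => z k (f jj)) (Finset.mem_univ kk), hkk]
      refine mul_le_mul_of_nonneg_left ?_ (hz0 k j)
      calc μ ^ (M - 1) = ∏ _jj ∈ Finset.univ.erase kk, μ := by
            rw [Finset.prod_const, Finset.card_erase_of_mem (Finset.mem_univ kk),
              Finset.card_univ, Fintype.card_fin]
        _ ≤ ∏ jj ∈ Finset.univ.erase kk, z k (f jj) :=
            Finset.prod_le_prod (fun _ _ => hμpos.le) (fun jj _ => hμle (f jj))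
    have hamin : amin ≤ a i f := hpm (i, f) (by simp [hf])
    have h1 : amin * (z k j * μ ^ (M - 1)) ≤ a i f * ∏ jj, z k (f jj) := by
      refine mul_le_mul hamin hprod ?_ (ha i f)
      exact mul_nonneg (hz0 k j) (pow_nonneg hμpos.le _)
    have h2 : a i f * ∏ jj, z k (f jj) ≤ rApp (B k) (z k) i := by
      refine le_trans ?_ (rApp_single_le (fun i f => (hBpos k i f).le) (hz0 k) i f)
      refine mul_le_mul_of_nonneg_right ?_ (Finset.prod_nonneg fun jj _ => hz0 k (f jj))
      have : (0:ℝ) < 1 / ((k:ℝ) + 1) := by positivity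
      simp only [hBdef]
      linarith
    have h3 : amin * (z k j * μ ^ (M - 1)) ≤ lam k * z k i ^ M := by
      rw [heig k i] at h2
      linarith
    have h4 : lam k * z k i ^ M ≤ Λ * z k i ^ M :=
      mul_le_mul_of_nonneg_right (hlamΛ k) (pow_nonneg (hz0 k i) M)
    have h5 : amin / Λ * (z k j * μ ^ (M - 1)) ≤ z k i ^ M := by
      rw [div_mul_eq_mul_div, div_le_iff₀ hΛpos]
      calc amin * (z k j * μ ^ (M - 1)) ≤ Λ * z k i ^ M := h3.trans h4
        _ = z k i ^ M * Λ := by ring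
    calc c * μ ^ (M - 1) * z k j ≤ amin / Λ * μ ^ (M - 1) * z k j := by
          refine mul_le_mul_of_nonneg_right (mul_le_mul_of_nonneg_right
            (min_le_right _ _) (pow_nonneg hμpos.le _)) (hz0 k j)
      _ = amin / Λ * (z k j * μ ^ (M - 1)) := by ring
      _ ≤ z k i ^ M := h5
  -- chain data
  have hchain := fun i j => chain_lemma (ι := ι) hM (hwi i j)
  choose pf qf hpq using hchain
  set Q : ℕ := Finset.sup Finset.univ fun i => Finset.sup Finset.univ fun j => qf i j with hQdef
  have hQle : ∀ i j, qf i j ≤ Q :=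
    fun i j => le_trans (Finset.le_sup (f := fun j => qf i j) (Finset.mem_univ j))
      (Finset.le_sup (f := fun i => Finset.sup Finset.univ fun j => qf i j)
        (Finset.mem_univ i))
  have hcard : (0:ℝ) < (Fintype.card ι : ℝ) := by exact_mod_cast Fintype.card_pos
  set ε0 : ℝ := c ^ Q / (Fintype.card ι : ℝ) with hε0def
  have hε0pos : 0 < ε0 := div_pos (pow_pos hcpos Q) hcard
  -- uniform lower bound on coordinates
  have hlow : ∀ k i, ε0 ≤ z k i := by
    intro k i
    obtain ⟨i0, -, hi0⟩ := Finset.exists_min_image Finset.univ (z k) Finset.univ_nonempty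
    set μ : ℝ := z k i0 with hμdef
    have hμpos : 0 < μ := hz k i0
    have hμle : ∀ i, μ ≤ z k i := fun i => hi0 i (Finset.mem_univ i)
    obtain ⟨jm, -, hjm⟩ := Finset.exists_le_of_sum_le (Finset.univ_nonempty (α := ι))
      (f := fun _ => (Fintype.card ι : ℝ)⁻¹) (g := z k)
      (by rw [Finset.sum_const, Finset.card_univ, nsmul_eq_mul,
        mul_inv_cancel₀ hcard.ne', (hzS k).2])
    have hkey := hpq i0 jm (z k) c μ hcpos.le hμpos (hz0 k)
      (fun i' j' h => harc k μ hμpos hμle i' j' h)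
    have hXpos : 0 < M ^ pf i0 jm := pow_pos (by omega) _
    have hsplit : μ ^ M ^ pf i0 jm = μ ^ (M ^ pf i0 jm - 1) * μ := by
      conv_lhs => rw [← Nat.succ_pred_eq_of_pos hXpos]
      rw [pow_succ, Nat.pred_eq_sub_one]
    have hkey2 : c ^ qf i0 jm * z k jm ≤ μ := by
      have h6 : z k i0 ^ M ^ pf i0 jm = μ ^ (M ^ pf i0 jm - 1) * μ := by
        rw [← hsplit, hμdef]
      rw [h6] at hkey
      have h7 : μ ^ (M ^ pf i0 jm - 1) * (c ^ qf i0 jm * z k jm)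
          ≤ μ ^ (M ^ pf i0 jm - 1) * μ := by
        calc μ ^ (M ^ pf i0 jm - 1) * (c ^ qf i0 jm * z k jm)
            = c ^ qf i0 jm * μ ^ (M ^ pf i0 jm - 1) * z k jm := by ring
          _ ≤ μ ^ (M ^ pf i0 jm - 1) * μ := hkey
      exact le_of_mul_le_mul_left h7 (pow_pos hμpos _)
    have h8 : ε0 ≤ c ^ qf i0 jm * z k jm := by
      rw [hε0def, div_eq_mul_inv]
      refine mul_le_mul (pow_le_pow_of_le_one hcpos.le hc1 (hQle i0 jm)) hjm
        (inv_nonneg.mpr hcard.le) (pow_nonneg hcpos.le _)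
    exact (h8.trans hkey2).trans (hμle i)
  -- pass to the limit
  set K : Set (ℝ × (ι → ℝ)) := Set.Icc 0 Λ ×ˢ stdSimplex ℝ ι with hKdef
  have hKcomp : IsCompact K := (isCompact_Icc).prod (isCompact_stdSimplex ℝ ι)
  have hmemK : ∀ k, (lam k, z k) ∈ K := fun k =>
    ⟨⟨(hlam k).le, hlamΛ k⟩, hzS k⟩
  obtain ⟨⟨lamb, zb⟩, hmemb, φ, hφ, hconv⟩ := hKcomp.tendsto_subseq hmemK
  have hlamconv : Tendsto (fun s => lam (φ s)) atTop (𝓝 lamb) :=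
    (continuous_fst.tendsto _).comp hconv
  have hzconv : Tendsto (fun s => z (φ s)) atTop (𝓝 zb) :=
    (continuous_snd.tendsto _).comp hconv
  have hzconv' : ∀ i, Tendsto (fun s => z (φ s) i) atTop (𝓝 (zb i)) :=
    fun i => ((continuous_apply i).tendsto _).comp hzconv
  have hδconv : Tendsto (fun s : ℕ => 1 / ((φ s : ℝ) + 1)) atTop (𝓝 0) :=
    tendsto_one_div_add_atTop_nhds_zero_nat.comp hφ.tendsto_atTop
  have hBsplit : ∀ (k : ℕ) (x : ι → ℝ) (i : ι), rApp (B k) x i = rApp a x i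
      + (1 / ((k:ℝ) + 1)) * rApp (M := M) (fun _ _ => (1:ℝ)) x i := by
    intro k x i
    simp only [rApp, hBdef, add_mul, Finset.sum_add_distrib, Finset.mul_sum, one_mul]
  have heigb : ∀ i, rApp a zb i = lamb * zb i ^ M := by
    intro i
    have hseq : ∀ s : ℕ, rApp a (z (φ s)) i
        + (1 / ((φ s : ℝ) + 1)) * rApp (M := M) (fun _ _ => (1:ℝ)) (z (φ s)) i
        = lam (φ s) * z (φ s) i ^ M := by
      intro s
      rw [← hBsplit]
      exact heig (φ s) i
    have hT1 : Tendsto (fun s => rApp a (z (φ s)) i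
        + (1 / ((φ s : ℝ) + 1)) * rApp (M := M) (fun _ _ => (1:ℝ)) (z (φ s)) i) atTop
        (𝓝 (rApp a zb i + 0 * rApp (M := M) (fun _ _ => (1:ℝ)) zb i)) := by
      refine Tendsto.add (((rApp_continuous a i).tendsto _).comp hzconv) ?_
      exact Tendsto.mul hδconv (((rApp_continuous _ i).tendsto _).comp hzconv)
    have hT2 : Tendsto (fun s => lam (φ s) * z (φ s) i ^ M) atTop
        (𝓝 (lamb * zb i ^ M)) :=
      Tendsto.mul hlamconv ((hzconv' i).pow M)
    have := tendsto_nhds_unique (hT1.congr fun s => hseq s) hT2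
    simpa using this
  have hzbpos : ∀ i, 0 < zb i := by
    intro i
    have : ε0 ≤ zb i :=
      le_of_tendsto_of_tendsto' tendsto_const_nhds (hzconv' i) (fun s => hlow (φ s) i)
    linarith
  have hlambpos : 0 < lamb := by
    obtain ⟨i', f', hif'⟩ := hne
    have h1 : 0 < a i' f' * ∏ jj, zb (f' jj) :=
      mul_pos (lt_of_le_of_ne (ha i' f') (Ne.symm hif'))
        (Finset.prod_pos fun jj _ => hzbpos (f' jj))
    have h2 := (rApp_single_le ha (fun i => (hzbpos i).le) i' f').trans_eq (heigb i')
    have h3 : 0 < lamb * zb i' ^ M := lt_of_lt_of_le h1 h2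
    by_contra hcon
    push_neg at hcon
    nlinarith [pow_pos (hzbpos i') M]
  exact ⟨lamb, zb, hlambpos, hzbpos, heigb⟩

/-- Collatz–Wielandt style bound: a positive eigenpair dominates all sub-eigenvalues. -/
theorem cwBound (hM : 1 ≤ M) (a : ι → (Fin M → ι) → ℝ) (ha : ∀ i f, 0 ≤ a i f)
    {lam : ℝ} {z : ι → ℝ} (hz : ∀ i, 0 < z i)
    (heig : ∀ i, rApp a z i = lam * z i ^ M)
    {x : ι → ℝ} (hx : ∀ i, 0 ≤ x i) (hx0 : ∃ i, x i ≠ 0)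
    {t : ℝ} (ht : ∀ i, t * x i ^ M ≤ rApp a x i) : t ≤ lam := by
  classical
  obtain ⟨i0, -, hi0⟩ := Finset.exists_max_image Finset.univ (fun i => x i / z i)
    Finset.univ_nonempty
  set c : ℝ := x i0 / z i0 with hcdef
  have hxc : ∀ i, x i ≤ c * z i := fun i =>
    (div_le_iff₀ (hz i)).mp (hi0 i (Finset.mem_univ i))
  have hcpos : 0 < c := by
    obtain ⟨i1, hi1⟩ := hx0
    have h1 : 0 < x i1 := lt_of_le_of_ne (hx i1) (Ne.symm hi1)
    exact lt_of_lt_of_le (div_pos h1 (hz i1)) (hi0 i1 (Finset.mem_univ i1))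
  have hxi0 : x i0 = c * z i0 := by
    rw [hcdef, div_mul_eq_mul_div, mul_div_assoc, div_self (hz i0).ne', mul_one]
  have hxi0pos : 0 < x i0 := by rw [hxi0]; exact mul_pos hcpos (hz i0)
  have h1 : t * x i0 ^ M ≤ rApp a x i0 := ht i0
  have h2 : rApp a x i0 ≤ rApp a (fun j => c * z j) i0 := rApp_mono ha hx hxc i0
  have h3 : rApp a (fun j => c * z j) i0 = lam * x i0 ^ M := by
    rw [rApp_smul, heig i0, hxi0, mul_pow]
    ring
  have h4 : t * x i0 ^ M ≤ lam * x i0 ^ M := h1.trans (h2.trans_eq h3)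
  exact le_of_mul_le_mul_right h4 (pow_pos hxi0pos M)

/-- Rigidity: sub-eigenvectors at a positive eigenvalue of an irreducible tensor are
multiples of the positive eigenvector. -/
theorem rigidity (hM : 1 ≤ M) (a : ι → (Fin M → ι) → ℝ) (ha : ∀ i f, 0 ≤ a i f)
    (hwi : ∀ i j, Relation.ReflTransGen (fun i j => ∃ f, a i f ≠ 0 ∧ ∃ k, f k = j) i j)
    {lam : ℝ} (hlam : 0 < lam) {z : ι → ℝ} (hz : ∀ i, 0 < z i)
    (heig : ∀ i, rApp a z i = lam * z i ^ M)
    {x : ι → ℝ} (hx : ∀ i, 0 ≤ x i) (hx0 : ∃ i, x i ≠ 0)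
    (hsub : ∀ i, lam * x i ^ M ≤ rApp a x i) :
    ∃ c : ℝ, 0 < c ∧ ∀ i, x i = c * z i := by
  classical
  obtain ⟨i0, -, hi0⟩ := Finset.exists_max_image Finset.univ (fun i => x i / z i)
    Finset.univ_nonempty
  set c : ℝ := x i0 / z i0 with hcdef
  have hxc : ∀ i, x i ≤ c * z i := fun i =>
    (div_le_iff₀ (hz i)).mp (hi0 i (Finset.mem_univ i))
  have hcpos : 0 < c := by
    obtain ⟨i1, hi1⟩ := hx0
    have h1 : 0 < x i1 := lt_of_le_of_ne (hx i1) (Ne.symm hi1)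
    exact lt_of_lt_of_le (div_pos h1 (hz i1)) (hi0 i1 (Finset.mem_univ i1))
  have hxi0 : x i0 = c * z i0 := by
    rw [hcdef, div_mul_eq_mul_div, mul_div_assoc, div_self (hz i0).ne', mul_one]
  refine ⟨c, hcpos, ?_⟩
  -- the contact set is closed under arcs
  have key : ∀ i, x i = c * z i → ∀ f, a i f ≠ 0 → ∀ kk, x (f kk) = c * z (f kk) := by
    intro i hi f hf kk
    have h2 : rApp a x i ≤ rApp a (fun j => c * z j) i := rApp_mono ha hx hxc i
    have h3 : rApp a (fun j => c * z j) i = lam * x i ^ M := by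
      rw [rApp_smul, heig i, hi, mul_pow]
      ring
    have h4 : rApp a x i = rApp a (fun j => c * z j) i :=
      le_antisymm h2 (h3 ▸ hsub i)
    have h5 : ∀ g : Fin M → ι, g ∈ Finset.univ →
        a i g * ∏ jj, x (g jj) ≤ a i g * ∏ jj, (fun j => c * z j) (g jj) := by
      intro g _
      refine mul_le_mul_of_nonneg_left ?_ (ha i g)
      exact Finset.prod_le_prod (fun jj _ => hx (g jj)) (fun jj _ => hxc (g jj))
    have h6 := (Finset.sum_eq_sum_iff_of_le h5).mp h4 f (Finset.mem_univ f)
    have h7 : ∏ jj, x (f jj) = ∏ jj, c * z (f jj) := by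
      have := mul_left_cancel₀ hf h6
      simpa using this
    have h8 : 0 < ∏ jj, c * z (f jj) :=
      Finset.prod_pos fun jj _ => mul_pos hcpos (hz (f jj))
    have h9 : ∀ jj, 0 < x (f jj) := by
      intro jj
      rcases (hx (f jj)).lt_or_eq with h | h
      · exact h
      · exfalso
        have : ∏ jj, x (f jj) = 0 :=
          Finset.prod_eq_zero (Finset.mem_univ jj) h.symm
        rw [h7] at this
        exact h8.ne' this
    by_contra hne2
    have hlt : x (f kk) < c * z (f kk) := lt_of_le_of_ne (hxc (f kk)) hne2
    have := Finset.prod_lt_prod (f := fun jj => x (f jj)) (g := fun jj => c * z (f jj))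
      (fun jj _ => h9 jj) (fun jj _ => hxc (f jj)) ⟨kk, Finset.mem_univ kk, hlt⟩
    rw [h7] at this
    exact lt_irrefl _ this
  intro j
  induction hwi i0 j with
  | refl => exact hxi0
  | tail _ hbc ih =>
    obtain ⟨f, hf, kk, rfl⟩ := hbc
    exact key _ ih f hf kk

end Aux

section Bridge

open Finset Relation Filter

variable {ι : Type} [Fintype ι] [DecidableEq ι] [Nonempty ι] {m : ℕ}

lemma tApp_bridge (A : Tensor ι m) (a : ι → (Fin (m - 1) → ι) → ℝ)
    (haA : ∀ i f, A i f = ((a i f : ℝ) : ℂ)) (x : ι → ℝ) (i : ι) :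
    tApp A (fun j => ((x j : ℝ) : ℂ)) i = ((rApp a x i : ℝ) : ℂ) := by
  unfold tApp rApp
  rw [Complex.ofReal_sum]
  refine Finset.sum_congr rfl fun f _ => ?_
  rw [haA, Complex.ofReal_mul, Complex.ofReal_prod]

lemma tApp_triangle (A : Tensor ι m) (a : ι → (Fin (m - 1) → ι) → ℝ)
    (haA : ∀ i f, A i f = ((a i f : ℝ) : ℂ)) (ha : ∀ i f, 0 ≤ a i f)
    (w : ι → ℂ) (i : ι) :
    ‖tApp A w i‖ ≤ rApp a (fun j => ‖w j‖) i := by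
  unfold tApp rApp
  refine (norm_sum_le _ _).trans ?_
  refine Finset.sum_le_sum fun f _ => le_of_eq ?_
  rw [norm_mul, norm_prod, haA, Complex.norm_real, Real.norm_of_nonneg (ha i f)]

end Bridge

/-- If `A` is nonnegative weakly irreducible and `y` is an eigenvector for an eigenvalue of
modulus `ρ(A)`, then `|y|` is an eigenvector for `ρ(A)` and equals the unique positive
eigenvector up to a positive scalar. -/
theorem stmt3 {n m : ℕ} (hm : 2 ≤ m) (hn : 1 ≤ n) (A : Tensor (Fin n) m)
    (hA : Nonneg A) (hwi : WeaklyIrreducible A)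
    (l : ℂ) (y : Fin n → ℂ) (hy : IsEigPair A l y) (hl : ‖l‖ = specRad A) :
    IsEigPair A ((specRad A : ℝ) : ℂ) (fun i => ((‖y i‖ : ℝ) : ℂ)) ∧
    ∀ z : Fin n → ℝ, (∀ i, 0 < z i) →
      IsEigPair A ((specRad A : ℝ) : ℂ) (fun i => (z i : ℂ)) →
      ∃ c : ℝ, 0 < c ∧ ∀ i, ‖y i‖ = c * z i := by
  classical
  have hM : 1 ≤ m - 1 := by omega
  haveI : Nonempty (Fin n) := ⟨⟨0, by omega⟩⟩
  choose a ha using hA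
  have ha0 : ∀ i f, 0 ≤ a i f := fun i f => (ha i f).1
  have haA : ∀ i f, A i f = ((a i f : ℝ) : ℂ) := fun i f => (ha i f).2
  obtain ⟨hy0, hyeq⟩ := hy
  obtain ⟨iy, hiy⟩ : ∃ i, y i ≠ 0 := by
    by_contra h
    push_neg at h
    exact hy0 (funext h)
  have hx0 : ∀ i, (0:ℝ) ≤ ‖y i‖ := fun i => norm_nonneg _
  have hxiy : ‖y iy‖ ≠ 0 := by simpa [map_eq_zero] using hiy
  by_cases hzero : ∀ i f, a i f = 0
  · -- the zero tensor: forces n = 1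
    have hA0 : ∀ i f, A i f = 0 := fun i f => by rw [haA i f, hzero i f]; simp
    have htApp0 : ∀ (w : Fin n → ℂ) i, tApp A w i = 0 := by
      intro w i
      simp [tApp, hA0]
    have hEig : Eigenvalues A = {0} := by
      ext μ
      constructor
      · rintro ⟨w, hw0, hweq⟩
        obtain ⟨iw, hiw⟩ : ∃ i, w i ≠ 0 := by
          by_contra h
          push_neg at h
          exact hw0 (funext h)
        have h := hweq iw
        rw [htApp0] at h
        rcases mul_eq_zero.mp h.symm with h' | h'
        · exact h'
        · exact absurd h' (pow_ne_zero _ hiw)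
      · rintro rfl
        exact ⟨y, hy0, fun i => by rw [htApp0]; simp⟩
    have hspec : specRad A = 0 := by
      rw [specRad, hEig]
      simp only [Set.image_singleton, norm_zero]
      exact csSup_singleton _
    have hsing : ∀ i j : Fin n, i = j := by
      intro i j
      induction hwi i j with
      | refl => rfl
      | tail _ hbc ih => obtain ⟨f, hf, -⟩ := hbc; exact absurd (hA0 _ f) hf
    constructor
    · refine ⟨?_, fun i => ?_⟩
      · intro hcon
        have h := congrFun hcon iy
        rw [Pi.zero_apply, Complex.ofReal_eq_zero] at h
        exact hxiy h
      · rw [htApp0, hspec]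
        simp
    · intro z hzpos hziep
      refine ⟨‖y iy‖ / z iy,
        div_pos (lt_of_le_of_ne (hx0 iy) (Ne.symm hxiy)) (hzpos iy), fun i => ?_⟩
      rw [hsing i iy, div_mul_cancel₀ _ (hzpos iy).ne']
  · -- main case
    push_neg at hzero
    have harcs : ∀ i j : Fin n,
        Relation.ReflTransGen (fun i j => ∃ f, a i f ≠ 0 ∧ ∃ k, f k = j) i j := by
      intro i j
      refine Relation.ReflTransGen.mono ?_ i j (hwi i j)
      rintro i' j' ⟨f, hf, k, hk⟩
      refine ⟨f, fun h0 => hf ?_, k, hk⟩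
      rw [haA, h0]
      simp
    obtain ⟨lam, zb, hlam, hzb, heigb⟩ := wiEig hM a ha0 harcs
      (by obtain ⟨i', f', h'⟩ := hzero; exact ⟨i', f', h'⟩)
    have hgreat : IsGreatest ((fun z : ℂ => ‖z‖) '' Eigenvalues A) lam := by
      constructor
      · refine ⟨(lam : ℂ), ⟨fun i => ((zb i : ℝ) : ℂ), ?_, fun i => ?_⟩, ?_⟩
        · intro hcon
          have h := congrFun hcon iy
          rw [Pi.zero_apply, Complex.ofReal_eq_zero] at h
          exact (hzb iy).ne' h
        · rw [tApp_bridge A a haA zb i, heigb i]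
          push_cast
          ring
        · show ‖(lam : ℂ)‖ = lam
          rw [Complex.norm_real, Real.norm_of_nonneg hlam.le]
      · rintro r ⟨μ, ⟨w, hw0, hweq⟩, rfl⟩
        obtain ⟨iw, hiw⟩ : ∃ i, w i ≠ 0 := by
          by_contra h
          push_neg at h
          exact hw0 (funext h)
        refine cwBound hM a ha0 hzb heigb (x := fun i => ‖w i‖)
          (fun i => norm_nonneg _)
          ⟨iw, by simpa [map_eq_zero] using hiw⟩ (fun i => ?_)
        calc ‖μ‖ * ‖w i‖ ^ (m - 1)
            = ‖μ * w i ^ (m - 1)‖ := by rw [norm_mul, norm_pow]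
          _ = ‖tApp A w i‖ := by rw [hweq i]
          _ ≤ _ := tApp_triangle A a haA ha0 w i
    have hspec : specRad A = lam := hgreat.csSup_eq
    have hsubx : ∀ i, lam * ‖y i‖ ^ (m - 1)
        ≤ rApp a (fun j => ‖y j‖) i := by
      intro i
      calc lam * ‖y i‖ ^ (m - 1)
          = ‖l‖ * ‖y i‖ ^ (m - 1) := by rw [hl, hspec]
        _ = ‖l * y i ^ (m - 1)‖ := by rw [norm_mul, norm_pow]
        _ = ‖tApp A y i‖ := by rw [hyeq i]
        _ ≤ _ := tApp_triangle A a haA ha0 y i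
    obtain ⟨c, hcpos, hcz⟩ := rigidity hM a ha0 harcs hlam hzb heigb hx0 ⟨iy, hxiy⟩ hsubx
    have heqx : ∀ i, rApp a (fun j => ‖y j‖) i
        = lam * ‖y i‖ ^ (m - 1) := by
      intro i
      have h1 : (fun j => ‖y j‖) = fun j => c * zb j := funext hcz
      rw [h1, rApp_smul, heigb i, hcz i, mul_pow]
      ring
    constructor
    · refine ⟨?_, fun i => ?_⟩
      · intro hcon
        have h := congrFun hcon iy
        rw [Pi.zero_apply, Complex.ofReal_eq_zero] at h
        exact hxiy h
      · rw [tApp_bridge A a haA (fun j => ‖y j‖) i, heqx i, hspec]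
        push_cast
        ring
    · intro z hzpos hziep
      obtain ⟨hz0', hzeq⟩ := hziep
      have hzreal : ∀ i, rApp a z i = lam * z i ^ (m - 1) := by
        intro i
        have h := hzeq i
        rw [tApp_bridge A a haA z i, hspec] at h
        have h2 : ((rApp a z i : ℝ) : ℂ) = ((lam * z i ^ (m - 1) : ℝ) : ℂ) := by
          rw [h]
          push_cast
          ring
        exact_mod_cast h2
      obtain ⟨c', hc'pos, hc'z⟩ :=
        rigidity hM a ha0 harcs hlam hzpos hzreal hx0 ⟨iy, hxiy⟩ hsubx
      exact ⟨c', hc'pos, hc'z⟩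

end PaperTensor
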